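/- For each odd natural number m and natural numbers n, k with 2k < m, the number of functions f: [n] → [m] arising from a fixed signed partition of [±n] with exactly k pairs of nonzero blocks via the ball-assignment procedure is exactly (m-1)(m-3)⋯(m-2k+1). -/

import Mathlib

open Finset

/-- The set `[±n] = {±1, …, ±n}` as a finset of integers. -/
noncomputable def pmSet (n : ℕ) : Finset ℤ := (Finset.Icc (-(n:ℤ)) (n:ℤ)).erase 0

/-- Negation of a set: `-C`. -/
def negSet (C : Finset ℤ) : Finset ℤ := C.image (fun x => -x)

/-- A signed partition of `[±n]`: a set partition of `[±n]` closed under block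
negation, with at most one self-negative block (the zero-block). -/
def IsSignedPartition (n : ℕ) (P : Finpartition (pmSet n)) : Prop :=
  (∀ C ∈ P.parts, negSet C ∈ P.parts) ∧
  (P.parts.filter (fun C => negSet C = C)).card ≤ 1

/-- `SB n k`: the type-B Stirling number of the second kind, i.e. the number of
signed partitions of `[±n]` with exactly `k` pairs of nonzero blocks. -/
noncomputable def SB (n k : ℕ) : ℕ :=
  Nat.card {P : Finpartition (pmSet n) //
    IsSignedPartition n P ∧ (P.parts.filter (fun C => negSet C ≠ C)).card = 2 * k}

/-- The minimal positive elements of the pairs of nonzero blocks, listed in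
increasing order; each key `a` identifies the positive block `B` of its pair
(the block of the pair containing the minimal positive element). -/
noncomputable def pairKeys (n : ℕ) (P : Finpartition (pmSet n)) : List ℕ :=
  ((Finset.Icc 1 n).filter (fun (a : ℕ) =>
      negSet (P.part (a : ℤ)) ≠ P.part (a : ℤ) ∧
      ((P.part (a : ℤ) ∪ negSet (P.part (a : ℤ))).filter (fun x => 0 < x)).min
        = ((a : ℤ) : WithTop ℤ))).sort (· ≤ ·)

/-- The next value after `p` in cyclic order on `{2,…,m}` which is not in `used`. -/
def nextUnused (m : ℕ) (used : Finset ℕ) (p : ℕ) : ℕ :=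
  ((List.range' (p + 1) (m - p) ++ List.range' 2 (p - 1)).find?
    (fun q => decide (q ∉ used))).getD 0

/-- One step of the ball-assignment procedure: for the pair of nonzero blocks
whose positive block `B` contains the key `a`, send the positive elements of `B`
to the chosen value `p` and the positive elements of `-B` to the next unused
value after `p` in cyclic order on `{2,…,m}`; record the validity of the choice
(`p` must be a previously unused value in `{2,…,m}`) and the used values. -/
noncomputable def assignStep (n m : ℕ) (P : Finpartition (pmSet n))
    (st : Bool × Finset ℕ × (ℕ → ℕ)) (ap : ℕ × ℕ) : Bool × Finset ℕ × (ℕ → ℕ) :=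
  let a := ap.1
  let p := ap.2
  let B := P.part (a : ℤ)
  let q := nextUnused m st.2.1 p
  (st.1 && decide (2 ≤ p) && decide (p ≤ m) && decide (p ∉ st.2.1),
   insert p (insert q st.2.1),
   fun i => if (i : ℤ) ∈ B then p else if -(i : ℤ) ∈ B then q else st.2.2 i)

/-- Run the ball-assignment procedure of Bagno–Garber on a signed partition `P`
with a list of choices, one choice per pair of nonzero blocks (pairs processed
in increasing order of minimal positive element).  Initially the positive
elements of the zero-block are sent to `1` and the value `1` is marked used.
Returns (validity flag, used values, the assignment `f : [n] → [m]`). -/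
noncomputable def assignRun (n m : ℕ) (P : Finpartition (pmSet n)) (choices : List ℕ) :
    Bool × Finset ℕ × (ℕ → ℕ) :=
  ((pairKeys n P).zip choices).foldl (assignStep n m P) (true, {1}, fun _ => 1)


section Aux


lemma mem_negSet {C : Finset ℤ} {x : ℤ} : x ∈ negSet C ↔ -x ∈ C := by
  simp only [negSet, Finset.mem_image]
  constructor
  · rintro ⟨y, hy, rfl⟩; simpa
  · intro h; exact ⟨-x, h, by ring⟩

lemma negSet_negSet (C : Finset ℤ) : negSet (negSet C) = C := by
  ext x; simp [mem_negSet]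

lemma mem_pmSet {n : ℕ} {x : ℤ} : x ∈ pmSet n ↔ x ≠ 0 ∧ -(n:ℤ) ≤ x ∧ x ≤ n := by
  simp [pmSet, and_comm]

lemma coe_mem_pmSet {n a : ℕ} (ha : a ∈ Finset.Icc 1 n) : ((a:ℤ)) ∈ pmSet n := by
  rw [Finset.mem_Icc] at ha
  rw [mem_pmSet]
  constructor
  · exact_mod_cast Nat.one_le_iff_ne_zero.mp ha.1
  · constructor
    · have : (0:ℤ) ≤ a := Int.natCast_nonneg a
      omega
    · exact_mod_cast ha.2


/-- The positive support of a pair of blocks is nonempty. -/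
lemma posFilter_nonempty {n : ℕ} {P : Finpartition (pmSet n)} {C : Finset ℤ}
    (hC : C ∈ P.parts) : ((C ∪ negSet C).filter (fun x => 0 < x)).Nonempty := by
  obtain ⟨x, hx⟩ := P.nonempty_of_mem_parts hC
  have hx0 : x ≠ 0 := by
    have := P.le hC hx
    simp [pmSet, Finset.mem_erase] at this
    exact this.1
  rcases lt_or_gt_of_ne hx0 with h | h
  · exact ⟨-x, by simp [Finset.mem_filter, Finset.mem_union, mem_negSet, hx, h, neg_pos]⟩
  · exact ⟨x, by simp [Finset.mem_filter, Finset.mem_union, hx, h]⟩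

lemma keySet_card (n k : ℕ) (P : Finpartition (pmSet n)) (hP : IsSignedPartition n P)
    (hk : (P.parts.filter (fun C => negSet C ≠ C)).card = 2 * k) :
    ((Finset.Icc 1 n).filter (fun (a : ℕ) =>
      negSet (P.part (a : ℤ)) ≠ P.part (a : ℤ) ∧
      ((P.part (a : ℤ) ∪ negSet (P.part (a : ℤ))).filter (fun x => 0 < x)).min
        = ((a : ℤ) : WithTop ℤ))).card = k := by
  classical
  set F := P.parts.filter (fun C => negSet C ≠ C) with hF
  set Fp := F.filter (fun C =>
      ((C ∪ negSet C).filter (fun x => 0 < x)).min ∈ C.image (fun x : ℤ => (x : WithTop ℤ)))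
    with hFp
  have hFpF : Fp ⊆ F := Finset.filter_subset _ _
  have hFparts : ∀ C ∈ F, C ∈ P.parts ∧ negSet C ≠ C := by
    intro C hC; rw [hF, Finset.mem_filter] at hC; exact hC
  -- Step 1: keySet.card = Fp.card
  have step1 : ((Finset.Icc 1 n).filter (fun (a : ℕ) =>
      negSet (P.part (a : ℤ)) ≠ P.part (a : ℤ) ∧
      ((P.part (a : ℤ) ∪ negSet (P.part (a : ℤ))).filter (fun x => 0 < x)).min
        = ((a : ℤ) : WithTop ℤ))).card = Fp.card := by
    refine Finset.card_bij (fun a _ => P.part (a:ℤ)) ?_ ?_ ?_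
    · intro a ha
      have ha' := Finset.mem_filter.mp ha
      obtain ⟨haI, hne, hmin⟩ : _ ∧ _ ∧ _ := ⟨ha'.1, ha'.2.1, ha'.2.2⟩
      have hamem := coe_mem_pmSet haI
      refine Finset.mem_filter.mpr ⟨Finset.mem_filter.mpr ⟨P.part_mem.mpr hamem, hne⟩, ?_⟩
      rw [hmin]
      exact Finset.mem_image.mpr ⟨(a:ℤ), P.mem_part hamem, rfl⟩
    · intro a ha b hb hab
      have ha' := Finset.mem_filter.mp ha
      have hb' := Finset.mem_filter.mp hb
      have hmina := ha'.2.2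
      have hminb := hb'.2.2
      have hab' : P.part (a:ℤ) = P.part (b:ℤ) := hab
      have h2 : ((a:ℤ) : WithTop ℤ) = ((b:ℤ) : WithTop ℤ) := by
        rw [← hmina, ← hminb, hab']
      exact_mod_cast h2
    · intro C hC
      obtain ⟨hCF, hCmin⟩ := Finset.mem_filter.mp hC
      obtain ⟨hCparts, hCne⟩ := hFparts C hCF
      obtain ⟨x, hxC, hxmin⟩ := Finset.mem_image.mp hCmin
      have hxS : x ∈ (C ∪ negSet C).filter (fun x => 0 < x) :=
        Finset.mem_of_min hxmin.symm
      have hxpos : 0 < x := (Finset.mem_filter.mp hxS).2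
      have hxn : x ≤ n := by
        have := P.le hCparts hxC
        simp [pmSet, Finset.mem_erase, Finset.mem_Icc] at this
        exact this.2.2
      refine ⟨x.toNat, ?_, ?_⟩
      · have hcoe : ((x.toNat : ℤ)) = x := Int.toNat_of_nonneg hxpos.le
        have haI : x.toNat ∈ Finset.Icc 1 n := by
          rw [Finset.mem_Icc]; omega
        have hpart : P.part ((x.toNat : ℤ)) = C := by
          rw [hcoe]; exact P.part_eq_of_mem hCparts hxC
        refine Finset.mem_filter.mpr ⟨haI, ?_, ?_⟩
        · rw [hpart]; exact hCne
        · rw [hpart, ← hxmin]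
          exact_mod_cast congrArg (fun z : ℤ => (z : WithTop ℤ)) hcoe.symm
      · have hcoe : ((x.toNat : ℤ)) = x := Int.toNat_of_nonneg hxpos.le
        show P.part ((x.toNat : ℤ)) = C
        rw [hcoe]; exact P.part_eq_of_mem hCparts hxC
  -- Step 2: Fp.card = (F \ Fp).card
  have step2 : Fp.card = (F \ Fp).card := by
    refine Finset.card_bij (fun C _ => negSet C) ?_ ?_ ?_
    · intro C hC
      obtain ⟨hCF, hCmin⟩ := Finset.mem_filter.mp hC
      obtain ⟨hCparts, hCne⟩ := hFparts C hCF
      have hnegparts : negSet C ∈ P.parts := hP.1 C hCparts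
      have hnegF : negSet C ∈ F := Finset.mem_filter.mpr ⟨hnegparts, by
        rw [negSet_negSet]; exact fun h => hCne h.symm⟩
      refine Finset.mem_sdiff.mpr ⟨hnegF, ?_⟩
      intro hmem
      obtain ⟨_, hmin2⟩ := Finset.mem_filter.mp hmem
      have hSeq : (negSet C ∪ negSet (negSet C)).filter (fun x => 0 < x)
          = (C ∪ negSet C).filter (fun x => 0 < x) := by
        rw [negSet_negSet, Finset.union_comm]
      rw [hSeq] at hmin2
      obtain ⟨x, hxC, hxmin⟩ := Finset.mem_image.mp hCmin
      obtain ⟨y, hyC, hymin⟩ := Finset.mem_image.mp hmin2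
      have hxy : y = x := by
        have : (y : WithTop ℤ) = (x : WithTop ℤ) := by rw [hxmin, hymin]
        exact_mod_cast this
      subst hxy
      exact hCne (P.eq_of_mem_parts hnegparts hCparts hyC hxC)
    · intro C₁ h₁ C₂ h₂ h
      have := congrArg negSet h
      rwa [negSet_negSet, negSet_negSet] at this
    · intro D hD
      obtain ⟨hDF, hDnp⟩ := Finset.mem_sdiff.mp hD
      obtain ⟨hDparts, hDne⟩ := hFparts D hDF
      have hnegparts : negSet D ∈ P.parts := hP.1 D hDparts
      have hnegF : negSet D ∈ F := Finset.mem_filter.mpr ⟨hnegparts, by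
        rw [negSet_negSet]; exact fun h => hDne h.symm⟩
      refine ⟨negSet D, ?_, negSet_negSet D⟩
      refine Finset.mem_filter.mpr ⟨hnegF, ?_⟩
      have hSeq : (negSet D ∪ negSet (negSet D)).filter (fun x => 0 < x)
          = (D ∪ negSet D).filter (fun x => 0 < x) := by
        rw [negSet_negSet, Finset.union_comm]
      rw [hSeq]
      obtain ⟨hne⟩ : Nonempty True := ⟨trivial⟩
      have hSne := posFilter_nonempty (P := P) hDparts
      obtain ⟨x₀, hx₀⟩ := hSne
      set S := (D ∪ negSet D).filter (fun x => 0 < x) with hS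
      have hSne' : S.Nonempty := ⟨x₀, hx₀⟩
      have hminmem : S.min' hSne' ∈ S := S.min'_mem hSne'
      have hmineq : (S.min' hSne' : WithTop ℤ) = S.min := Finset.coe_min' hSne'
      have hmem2 : S.min' hSne' ∈ D ∪ negSet D := (Finset.mem_filter.mp hminmem).1
      have hnotD : S.min' hSne' ∉ D := by
        intro hmem
        exact hDnp (Finset.mem_filter.mpr ⟨hDF, by
          rw [← hmineq]; exact Finset.mem_image.mpr ⟨_, hmem, rfl⟩⟩)
      have : S.min' hSne' ∈ negSet D := by
        rcases Finset.mem_union.mp hmem2 with h | h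
        · exact absurd h hnotD
        · exact h
      rw [← hmineq]
      exact Finset.mem_image.mpr ⟨_, this, rfl⟩
  have hsplit : (F \ Fp).card + Fp.card = F.card := Finset.card_sdiff_add_card_eq_card hFpF
  rw [step1]
  omega

def step2 (m : ℕ) (st : Bool × Finset ℕ) (p : ℕ) : Bool × Finset ℕ :=
  (st.1 && decide (2 ≤ p) && decide (p ≤ m) && decide (p ∉ st.2),
   insert p (insert (nextUnused m st.2 p) st.2))

lemma step2_false (m : ℕ) : ∀ (l : List ℕ) (U : Finset ℕ),
    (l.foldl (step2 m) (false, U)).1 = false := by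
  intro l
  induction l with
  | nil => intro U; rfl
  | cons p l ih =>
    intro U
    show (l.foldl (step2 m) (step2 m (false, U) p)).1 = false
    have h : step2 m (false, U) p = (false, insert p (insert (nextUnused m U p) U)) := by
      simp [step2]
    rw [h]; exact ih _

lemma nextUnused_spec (m : ℕ) (U : Finset ℕ) (p : ℕ) (hU : U ⊆ Finset.Icc 1 m) (h1 : 1 ∈ U)
    (hp2 : 2 ≤ p) (hpm : p ≤ m) (hpU : p ∉ U) (hcard : U.card + 2 ≤ m) :
    nextUnused m U p ∈ Finset.Icc 2 m ∧ nextUnused m U p ∉ U ∧ nextUnused m U p ≠ p := by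
  classical
  have hcards : 2 ≤ (Finset.Icc 2 m \ U).card := by
    have heq : Finset.Icc 2 m \ U = Finset.Icc 1 m \ U := by
      ext x
      simp only [Finset.mem_sdiff, Finset.mem_Icc]
      constructor
      · rintro ⟨⟨h2, hm'⟩, hxU⟩; exact ⟨⟨by omega, hm'⟩, hxU⟩
      · rintro ⟨⟨h1', hm'⟩, hxU⟩
        have hx1 : x ≠ 1 := fun h => hxU (h ▸ h1)
        exact ⟨⟨by omega, hm'⟩, hxU⟩
    rw [heq, Finset.card_sdiff_of_subset hU, Nat.card_Icc]
    have hle := Finset.card_le_card hU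
    rw [Nat.card_Icc] at hle
    omega
  have hex : ∃ x, x ∈ Finset.Icc 2 m ∧ x ∉ U ∧ x ≠ p := by
    have h1' := Finset.pred_card_le_card_erase (s := Finset.Icc 2 m \ U) (a := p)
    obtain ⟨x, hx⟩ := Finset.card_pos.mp (show 0 < ((Finset.Icc 2 m \ U).erase p).card by omega)
    rw [Finset.mem_erase, Finset.mem_sdiff] at hx
    exact ⟨x, hx.2.1, hx.2.2, hx.1⟩
  obtain ⟨x, hxm, hxU, hxp⟩ := hex
  rw [Finset.mem_Icc] at hxm
  set f : ℕ → Bool := fun q => decide (q ∉ U) with hf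
  have hsplit : List.range' 2 (p-1) = List.range' 2 (p-2) ++ [p] := by
    have h : p - 1 = (p-2) + 1 := by omega
    rw [h, List.range'_concat]
    have h2 : 2 + 1 * (p - 2) = p := by omega
    rw [h2]
  have hfp : [p].find? f = some p := by simp [hf, hpU]
  unfold nextUnused
  rw [hsplit, List.find?_append, List.find?_append, hfp]
  rcases h1f : (List.range' (p+1) (m-p)).find? f with _ | q
  · rcases h2f : (List.range' 2 (p-2)).find? f with _ | q
    · exfalso
      have hxall : x ∈ List.range' (p+1) (m-p) ∨ x ∈ List.range' 2 (p-2) := by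
        rcases Nat.lt_or_ge x p with h | h
        · right; rw [List.mem_range'_1]; omega
        · left; rw [List.mem_range'_1]; omega
      rcases hxall with h | h
      · have := List.find?_eq_none.mp h1f x h
        simp [hf, hxU] at this
      · have := List.find?_eq_none.mp h2f x h
        simp [hf, hxU] at this
    · have hmem := List.mem_of_find?_eq_some h2f
      rw [List.mem_range'_1] at hmem
      have hq := List.find?_some h2f
      simp only [hf, decide_eq_true_eq] at hq
      simp only [Option.none_or, Option.or, Option.getD_some]
      refine ⟨Finset.mem_Icc.mpr ⟨hmem.1, by omega⟩, hq, by omega⟩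
  · have hmem := List.mem_of_find?_eq_some h1f
    rw [List.mem_range'_1] at hmem
    have hq := List.find?_some h1f
    simp only [hf, decide_eq_true_eq] at hq
    simp only [Option.or, Option.getD_some]
    refine ⟨Finset.mem_Icc.mpr ⟨by omega, by omega⟩, hq, by omega⟩

def V (m : ℕ) : ℕ → Finset ℕ → Finset (List ℕ)
  | 0, _ => {[]}
  | l+1, U => (Finset.Icc 2 m \ U).biUnion fun p =>
      (V m l (insert p (insert (nextUnused m U p) U))).image (p :: ·)

lemma mem_V (m : ℕ) : ∀ (l : ℕ) (U : Finset ℕ) (c : List ℕ),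
    c ∈ V m l U ↔ c.length = l ∧ (c.foldl (step2 m) (true, U)).1 = true := by
  intro l
  induction l with
  | zero =>
    intro U c
    simp only [V, Finset.mem_singleton]
    constructor
    · rintro rfl; exact ⟨rfl, rfl⟩
    · rintro ⟨hlen, _⟩; exact List.length_eq_zero_iff.mp hlen
  | succ l ih =>
    intro U c
    simp only [V, Finset.mem_biUnion, Finset.mem_image]
    constructor
    · rintro ⟨p, hp, c', hc', rfl⟩
      rw [Finset.mem_sdiff, Finset.mem_Icc] at hp
      obtain ⟨⟨hp2, hpm⟩, hpU⟩ := hp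
      obtain ⟨hlen, hflag⟩ := (ih _ c').mp hc'
      refine ⟨by simp [hlen], ?_⟩
      show ((c'.foldl (step2 m) (step2 m (true, U) p)).1 = true)
      have hstep : step2 m (true, U) p = (true, insert p (insert (nextUnused m U p) U)) := by
        simp [step2, hp2, hpm, hpU]
      rw [hstep]; exact hflag
    · rintro ⟨hlen, hflag⟩
      rcases c with _ | ⟨p, c'⟩
      · simp at hlen
      · have hlen' : c'.length = l := by simpa using hlen
        replace hflag : (c'.foldl (step2 m) (step2 m (true, U) p)).1 = true := hflag
        by_cases hcond : 2 ≤ p ∧ p ≤ m ∧ p ∉ U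
        · obtain ⟨hp2, hpm, hpU⟩ := hcond
          have hstep : step2 m (true, U) p = (true, insert p (insert (nextUnused m U p) U)) := by
            simp [step2, hp2, hpm, hpU]
          rw [hstep] at hflag
          exact ⟨p, Finset.mem_sdiff.mpr ⟨Finset.mem_Icc.mpr ⟨hp2, hpm⟩, hpU⟩,
            c', (ih _ c').mpr ⟨hlen', hflag⟩, rfl⟩
        · exfalso
          have hfalse : (step2 m (true, U) p).1 = false := by
            simp only [step2]
            by_cases h1 : 2 ≤ p <;> by_cases h2 : p ≤ m <;> by_cases h3 : p ∉ U <;>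
              simp [h1, h2, h3] at hcond ⊢ <;> tauto
          have : step2 m (true, U) p = (false, (step2 m (true, U) p).2) := by
            rw [← hfalse]
          rw [this, step2_false] at hflag
          exact Bool.false_ne_true hflag

lemma card_V (m : ℕ) : ∀ (l : ℕ) (U : Finset ℕ), U ⊆ Finset.Icc 1 m → 1 ∈ U →
    U.card + 2*l ≤ m →
    (V m l U).card = ∏ j ∈ Finset.range l, (m - U.card - 2*j) := by
  intro l
  induction l with
  | zero => intro U _ _ _; simp [V]
  | succ l ih =>
    intro U hU h1 hcard
    have hkey : ∀ p ∈ Finset.Icc 2 m \ U,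
        ((V m l (insert p (insert (nextUnused m U p) U))).image (p :: ·)).card
          = ∏ j ∈ Finset.range l, (m - U.card - 2 - 2*j) := by
      intro p hp
      rw [Finset.mem_sdiff, Finset.mem_Icc] at hp
      obtain ⟨⟨hp2, hpm⟩, hpU⟩ := hp
      obtain ⟨hqm, hqU, hqp⟩ := nextUnused_spec m U p hU h1 hp2 hpm hpU (by omega)
      rw [Finset.mem_Icc] at hqm
      set q := nextUnused m U p
      have hcard' : (insert p (insert q U)).card = U.card + 2 := by
        rw [Finset.card_insert_of_notMem (by simp [hpU, hqp, Ne.symm hqp]),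
          Finset.card_insert_of_notMem hqU]
      rw [Finset.card_image_of_injective _ (fun a b h => by simpa using h)]
      rw [ih _ ?_ ?_ ?_]
      · rw [hcard']
        exact Finset.prod_congr rfl (fun j _ => by omega)
      · intro x hx
        simp only [Finset.mem_insert] at hx
        rcases hx with rfl | rfl | hx
        · exact Finset.mem_Icc.mpr ⟨by omega, hpm⟩
        · exact Finset.mem_Icc.mpr ⟨by omega, hqm.2⟩
        · exact hU hx
      · simp [h1]
      · rw [hcard']; omega
    have hdisj : ∀ p₁ ∈ Finset.Icc 2 m \ U, ∀ p₂ ∈ Finset.Icc 2 m \ U, p₁ ≠ p₂ →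
        Disjoint ((V m l (insert p₁ (insert (nextUnused m U p₁) U))).image (p₁ :: ·))
          ((V m l (insert p₂ (insert (nextUnused m U p₂) U))).image (p₂ :: ·)) := by
      intro p₁ _ p₂ _ hne
      rw [Finset.disjoint_left]
      intro c hc1 hc2
      obtain ⟨c₁, _, rfl⟩ := Finset.mem_image.mp hc1
      obtain ⟨c₂, _, heq⟩ := Finset.mem_image.mp hc2
      injection heq with h1 h2
      exact hne h1.symm
    show (V m (l+1) U).card = _
    rw [show V m (l+1) U = (Finset.Icc 2 m \ U).biUnion fun p =>
      (V m l (insert p (insert (nextUnused m U p) U))).image (p :: ·) from rfl]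
    rw [Finset.card_biUnion hdisj]
    rw [Finset.sum_congr rfl hkey, Finset.sum_const, smul_eq_mul]
    have hcardIcc : (Finset.Icc 2 m \ U).card = m - U.card := by
      have heq : Finset.Icc 2 m \ U = Finset.Icc 1 m \ U := by
        ext x
        simp only [Finset.mem_sdiff, Finset.mem_Icc]
        constructor
        · rintro ⟨⟨h2, hm'⟩, hxU⟩; exact ⟨⟨by omega, hm'⟩, hxU⟩
        · rintro ⟨⟨h1', hm'⟩, hxU⟩
          have hx1 : x ≠ 1 := fun h => hxU (h ▸ h1)
          exact ⟨⟨by omega, hm'⟩, hxU⟩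
      rw [heq, Finset.card_sdiff_of_subset hU, Nat.card_Icc]
      omega
    rw [hcardIcc, Finset.prod_range_succ']
    have hc2 : ∀ j ∈ Finset.range l, m - U.card - 2 - 2*j = m - U.card - 2*(j+1) := by
      intro j _; omega
    rw [Finset.prod_congr rfl hc2, mul_comm]
    congr 1

lemma foldl_proj (n m : ℕ) (P : Finpartition (pmSet n)) :
    ∀ (l : List (ℕ × ℕ)) (s : Bool × Finset ℕ × (ℕ → ℕ)),
    ((l.foldl (assignStep n m P) s).1, (l.foldl (assignStep n m P) s).2.1)
      = (l.map Prod.snd).foldl (step2 m) (s.1, s.2.1) := by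
  intro l
  induction l with
  | nil => intro s; rfl
  | cons hd t ih =>
    intro s
    show ((t.foldl (assignStep n m P) (assignStep n m P s hd)).1,
      (t.foldl (assignStep n m P) (assignStep n m P s hd)).2.1)
        = (t.map Prod.snd).foldl (step2 m) (step2 m (s.1, s.2.1) hd.2)
    rw [ih (assignStep n m P s hd)]
    rfl

lemma foldl_pres (n m : ℕ) (P : Finpartition (pmSet n)) (j : ℕ) :
    ∀ (l : List (ℕ × ℕ)) (s : Bool × Finset ℕ × (ℕ → ℕ)),
    (∀ ap ∈ l, ((j:ℤ) ∉ P.part ((ap.1 : ℕ) : ℤ) ∧ -(j:ℤ) ∉ P.part ((ap.1 : ℕ) : ℤ))) →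
    (l.foldl (assignStep n m P) s).2.2 j = s.2.2 j := by
  intro l
  induction l with
  | nil => intro s _; rfl
  | cons hd t ih =>
    intro s h
    show (t.foldl (assignStep n m P) (assignStep n m P s hd)).2.2 j = s.2.2 j
    rw [ih _ (fun ap hap => h ap (List.mem_cons_of_mem _ hap))]
    have hj := h hd (List.mem_cons_self)
    simp only [assignStep]
    rw [if_neg hj.1, if_neg hj.2]

lemma foldl_get (n m : ℕ) (P : Finpartition (pmSet n)) :
    ∀ (L : List ℕ) (c : List ℕ) (s : Bool × Finset ℕ × (ℕ → ℕ)) (i : ℕ)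
      (hi : i < L.length) (hic : i < c.length),
    (∀ a ∈ L, (a:ℤ) ∈ P.part (a:ℤ)) →
    L.Pairwise (fun (a b : ℕ) => ((a:ℤ) ∉ P.part (b:ℤ)) ∧ (-(a:ℤ) ∉ P.part (b:ℤ))) →
    ((L.zip c).foldl (assignStep n m P) s).2.2 (L.get ⟨i, hi⟩) = c.get ⟨i, hic⟩ := by
  intro L
  induction L with
  | nil => intro c s i hi; simp at hi
  | cons a L' ih =>
    intro c s i hi hic hown hpw
    rcases c with _ | ⟨p, c'⟩
    · simp at hic
    · obtain ⟨hhead, htail⟩ := List.pairwise_cons.mp hpw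
      rcases i with _ | i
      · show ((L'.zip c').foldl (assignStep n m P) (assignStep n m P s (a, p))).2.2 a = p
        rw [foldl_pres n m P a (L'.zip c') _ ?_]
        · have ha : (a:ℤ) ∈ P.part (a:ℤ) := hown a (List.mem_cons_self)
          simp only [assignStep]
          rw [if_pos ha]
        · intro ap hap
          exact hhead ap.1 (List.of_mem_zip hap).1
      · show ((L'.zip c').foldl (assignStep n m P) (assignStep n m P s (a, p))).2.2
            (L'.get ⟨i, by simpa using hi⟩) = c'.get ⟨i, by simpa using hic⟩
        exact ih c' _ i _ _ (fun b hb => hown b (List.mem_cons_of_mem _ hb)) htail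

lemma keys_own (n : ℕ) (P : Finpartition (pmSet n)) :
    ∀ a ∈ pairKeys n P, (a:ℤ) ∈ P.part (a:ℤ) := by
  intro a ha
  rw [pairKeys, Finset.mem_sort] at ha
  exact P.mem_part (coe_mem_pmSet (Finset.mem_filter.mp ha).1)

lemma keys_pairwise (n : ℕ) (P : Finpartition (pmSet n)) (hP : IsSignedPartition n P) :
    (pairKeys n P).Pairwise
      (fun (a b : ℕ) => ((a:ℤ) ∉ P.part (b:ℤ)) ∧ (-(a:ℤ) ∉ P.part (b:ℤ))) := by
  have hnd : (pairKeys n P).Nodup := Finset.sort_nodup _ _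
  refine List.Pairwise.imp_of_mem ?_ hnd
  intro a b ha hb hne
  rw [pairKeys, Finset.mem_sort] at ha hb
  have ha' := Finset.mem_filter.mp ha
  have hb' := Finset.mem_filter.mp hb
  have haI := ha'.1
  have hbI := hb'.1
  have hmina := ha'.2.2
  have hminb := hb'.2.2
  have hbmem : ((b:ℤ)) ∈ pmSet n := coe_mem_pmSet hbI
  constructor
  · intro h
    have hpart : P.part ((a:ℤ)) = P.part ((b:ℤ)) := P.part_eq_of_mem (P.part_mem.mpr hbmem) h
    apply hne
    have h2 : (((a:ℕ):ℤ) : WithTop ℤ) = (((b:ℕ):ℤ) : WithTop ℤ) := by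
      rw [← hmina, ← hminb, hpart]
    exact_mod_cast h2
  · intro h
    have h' : ((a:ℤ)) ∈ negSet (P.part ((b:ℤ))) := mem_negSet.mpr h
    have hnegparts : negSet (P.part ((b:ℤ))) ∈ P.parts := hP.1 _ (P.part_mem.mpr hbmem)
    have hpart : P.part ((a:ℤ)) = negSet (P.part ((b:ℤ))) := P.part_eq_of_mem hnegparts h'
    have hSeq : (P.part ((a:ℤ)) ∪ negSet (P.part ((a:ℤ)))).filter (fun x => 0 < x)
        = (P.part ((b:ℤ)) ∪ negSet (P.part ((b:ℤ)))).filter (fun x => 0 < x) := by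
      rw [hpart, negSet_negSet, Finset.union_comm]
    apply hne
    have h2 : (((a:ℕ):ℤ) : WithTop ℤ) = (((b:ℕ):ℤ) : WithTop ℤ) := by
      rw [← hmina, ← hminb, hSeq]
    exact_mod_cast h2

end Aux

/-- For odd `m` and a fixed signed partition of `[±n]` with exactly `k` pairs of
nonzero blocks (`2k < m`), the number of functions `f : [n] → [m]` arising from
it via the ball-assignment procedure is `(m-1)(m-3)⋯(m-2k+1)`. -/
theorem card_assignments (n m k : ℕ) (hm : Odd m) (hmk : 2 * k < m)
    (P : Finpartition (pmSet n)) (hP : IsSignedPartition n P)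
    (hk : (P.parts.filter (fun C => negSet C ≠ C)).card = 2 * k) :
    Nat.card {f : ℕ → ℕ // ∃ choices : List ℕ, choices.length = k ∧
        (assignRun n m P choices).1 = true ∧ f = (assignRun n m P choices).2.2} =
      ∏ j ∈ Finset.range k, (m - (2 * j + 1)) := by
  classical
  have hkeyset := keySet_card n k P hP hk
  have hkeylen : (pairKeys n P).length = k := by
    rw [pairKeys, Finset.length_sort]; exact hkeyset
  have hproj : ∀ c : List ℕ, c.length = k →
      (assignRun n m P c).1 = (c.foldl (step2 m) (true, {1})).1 := by
    intro c hc
    have h := foldl_proj n m P ((pairKeys n P).zip c) (true, {1}, fun _ => 1)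
    have hmap : ((pairKeys n P).zip c).map Prod.snd = c :=
      List.map_snd_zip (by rw [hkeylen, hc])
    rw [hmap] at h
    exact congrArg Prod.fst h
  have hmemV : ∀ c : List ℕ, c ∈ V m k {1} ↔
      c.length = k ∧ (assignRun n m P c).1 = true := by
    intro c
    rw [mem_V]
    constructor
    · rintro ⟨h1, h2⟩; exact ⟨h1, by rw [hproj c h1]; exact h2⟩
    · rintro ⟨h1, h2⟩; exact ⟨h1, by rw [← hproj c h1]; exact h2⟩
  have hown := keys_own n P
  have hpw := keys_pairwise n P hP
  have hbij : Nat.card {c : List ℕ // c ∈ V m k {1}} =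
      Nat.card {f : ℕ → ℕ // ∃ choices : List ℕ, choices.length = k ∧
        (assignRun n m P choices).1 = true ∧ f = (assignRun n m P choices).2.2} := by
    refine Nat.card_eq_of_bijective
      (fun c => ⟨(assignRun n m P c.1).2.2, c.1, ((hmemV c.1).mp c.2).1,
        ((hmemV c.1).mp c.2).2, rfl⟩) ⟨?_, ?_⟩
    · rintro ⟨c₁, hc₁⟩ ⟨c₂, hc₂⟩ h
      have hval : (assignRun n m P c₁).2.2 = (assignRun n m P c₂).2.2 :=
        congrArg Subtype.val h
      have hl₁ := ((hmemV c₁).mp hc₁).1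
      have hl₂ := ((hmemV c₂).mp hc₂).1
      apply Subtype.ext
      show c₁ = c₂
      apply List.ext_get (by rw [hl₁, hl₂])
      intro i h₁ h₂
      have hi : i < (pairKeys n P).length := by rw [hkeylen]; omega
      have e₁ := foldl_get n m P (pairKeys n P) c₁ (true, {1}, fun _ => 1) i hi h₁ hown hpw
      have e₂ := foldl_get n m P (pairKeys n P) c₂ (true, {1}, fun _ => 1) i hi h₂ hown hpw
      rw [← e₁, ← e₂]
      show (assignRun n m P c₁).2.2 _ = (assignRun n m P c₂).2.2 _
      rw [hval]
    · rintro ⟨f, c, hc1, hc2, hc3⟩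
      exact ⟨⟨c, (hmemV c).mpr ⟨hc1, hc2⟩⟩, Subtype.ext hc3.symm⟩
  rw [← hbij, Nat.card_eq_fintype_card, Fintype.card_coe]
  rw [card_V m k {1} ?_ ?_ ?_]
  · rw [Finset.card_singleton]
    exact Finset.prod_congr rfl (fun j _ => by omega)
  · intro x hx
    rw [Finset.mem_singleton] at hx
    subst hx
    exact Finset.mem_Icc.mpr ⟨le_refl 1, by omega⟩
  · exact Finset.mem_singleton_self 1
  · rw [Finset.card_singleton]; omega
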